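/- Let N ≥ 1, let A be a nonempty bounded subset of ℝ^N, and let D ≥ 0, α > 0, M ∈ (0,∞). Assume there exist C > 0 and t₀ > 0 such that | |A_t| t^{D−N} − M | ≤ C t^α for all t ∈ (0, t₀) (i.e., |A_t| = t^{N−D}(M + O(t^α)) as t → 0⁺). Then the box dimension of A exists and equals D, A is Minkowski measurable with Minkowski content M^D(A) = M, and for every δ > 0 the tube zeta function ζ̃_A(s) = ∫_0^δ t^{s−N−1}|A_t| dt, whose abscissa of convergence is D, possesses a (necessarily unique) meromorphic continuation F to the open half-plane {Re s > D − α}. The only pole of F in this half-plane is s = D; it is simple, and lim_{s→D} (s−D)F(s) = M. -/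

import Mathlib

open MeasureTheory Metric Filter Set
open scoped ENNReal Topology

/-- The upper `r`-dimensional Minkowski content of a subset of `ℝ^N`. -/
noncomputable def upperMink (N : ℕ) (A : Set (EuclideanSpace ℝ (Fin N))) (r : ℝ) : ℝ≥0∞ :=
  Filter.limsup (fun t : ℝ => volume (thickening t A) / ENNReal.ofReal (t ^ ((N : ℝ) - r)))
    (𝓝[>] (0 : ℝ))

/-- The lower `r`-dimensional Minkowski content of a subset of `ℝ^N`. -/
noncomputable def lowerMink (N : ℕ) (A : Set (EuclideanSpace ℝ (Fin N))) (r : ℝ) : ℝ≥0∞ :=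
  Filter.liminf (fun t : ℝ => volume (thickening t A) / ENNReal.ofReal (t ^ ((N : ℝ) - r)))
    (𝓝[>] (0 : ℝ))

/-- The upper box (Minkowski) dimension of a subset of `ℝ^N`. -/
noncomputable def upperBoxDim (N : ℕ) (A : Set (EuclideanSpace ℝ (Fin N))) : ℝ :=
  sInf {r : ℝ | 0 < r ∧ upperMink N A r = 0}

/-- The lower box (Minkowski) dimension of a subset of `ℝ^N`. -/
noncomputable def lowerBoxDim (N : ℕ) (A : Set (EuclideanSpace ℝ (Fin N))) : ℝ :=
  sInf {r : ℝ | 0 < r ∧ lowerMink N A r = 0}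

/-- Minkowski measurable case: if `|A_t| = t^{N−D}(M + O(t^α))` as `t → 0⁺`,
then `dim_B A = D`, `A` is Minkowski measurable with content `M`, and for every `δ > 0` the tube
zeta function has abscissa of convergence `D` and a meromorphic continuation `F` to
`{Re s > D − α}` whose only pole there is a simple pole at `s = D` with residue `M`. -/
theorem stmt9 (N : ℕ) (hN : 1 ≤ N) (A : Set (EuclideanSpace ℝ (Fin N)))
    (hA : A.Nonempty) (hb : Bornology.IsBounded A)
    (D α M C t₀ : ℝ) (hD : 0 ≤ D) (hα : 0 < α) (hM : 0 < M) (hC : 0 < C) (ht₀ : 0 < t₀)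
    (hasymp : ∀ t ∈ Ioo (0 : ℝ) t₀,
      |(volume (thickening t A)).toReal * t ^ (D - (N : ℝ)) - M| ≤ C * t ^ α) :
    lowerBoxDim N A = D ∧ upperBoxDim N A = D ∧
    lowerMink N A D = ENNReal.ofReal M ∧ upperMink N A D = ENNReal.ofReal M ∧
    ∀ δ : ℝ, 0 < δ →
      sInf {β : ℝ |
          IntegrableOn
            (fun t : ℝ => t ^ (β - (N : ℝ) - 1) * (volume (thickening t A)).toReal)
            (Ioc 0 δ) volume} = D ∧
      ∃ F : ℂ → ℂ,
        DifferentiableOn ℂ F ({s : ℂ | D - α < s.re} \ {(D : ℂ)}) ∧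
        (∀ s : ℂ, D < s.re →
          F s = ∫ t in Ioc (0 : ℝ) δ,
            (t : ℂ) ^ (s - (N : ℂ) - 1) * ((volume (thickening t A)).toReal : ℂ)) ∧
        Tendsto (fun s : ℂ => (s - (D : ℂ)) * F s) (𝓝[≠] (D : ℂ)) (𝓝 (M : ℂ)) := by
  set V : ℝ → ℝ := fun t => (volume (thickening t A)).toReal with hV
  have hfin : ∀ t : ℝ, volume (thickening t A) < ⊤ := fun t =>
    (hb.thickening).measure_lt_top
  have hVnn : ∀ t, 0 ≤ V t := fun t => ENNReal.toReal_nonneg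
  have hVmono : Monotone V := fun a b hab =>
    ENNReal.toReal_mono (hfin b).ne (measure_mono (thickening_mono hab A))
  have hVmeas : Measurable V := hVmono.measurable
  -- the rescaled volume tends to M
  have hCα : Tendsto (fun t : ℝ => C * t ^ α) (𝓝[>] 0) (𝓝 0) := by
    have h1 : Tendsto (fun t : ℝ => t ^ α) (𝓝 (0:ℝ)) (𝓝 ((0:ℝ) ^ α)) :=
      (Real.continuousAt_rpow_const 0 α (Or.inr hα.le)).tendsto
    rw [Real.zero_rpow hα.ne'] at h1
    simpa using (h1.const_mul C).mono_left nhdsWithin_le_nhds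
  have hev : ∀ᶠ t in 𝓝[>] (0:ℝ), t ∈ Ioo (0:ℝ) t₀ := by
    filter_upwards [Ioo_mem_nhdsGT_of_mem ⟨le_refl (0:ℝ), ht₀⟩] with t ht using ht
  have hL : Tendsto (fun t : ℝ => V t * t ^ (D - (N:ℝ))) (𝓝[>] 0) (𝓝 M) := by
    rw [tendsto_iff_dist_tendsto_zero]
    apply squeeze_zero' (Eventually.of_forall fun t => dist_nonneg)
      (by filter_upwards [hev] with t ht
          simpa [Real.dist_eq] using hasymp t ht) hCα
  -- rewrite the ENNReal ratio
  have hratio : ∀ r : ℝ, ∀ᶠ t in 𝓝[>] (0:ℝ),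
      volume (thickening t A) / ENNReal.ofReal (t ^ ((N : ℝ) - r))
        = ENNReal.ofReal (V t * t ^ (D - (N:ℝ)) * t ^ (r - D)) := by
    intro r
    filter_upwards [self_mem_nhdsWithin] with t ht
    have ht' : (0:ℝ) < t := ht
    have hpow : (0:ℝ) < t ^ ((N:ℝ) - r) := Real.rpow_pos_of_pos ht' _
    rw [← ENNReal.ofReal_toReal (hfin t).ne, ← ENNReal.ofReal_div_of_pos hpow]
    congr 1
    rw [div_eq_mul_inv, ← Real.rpow_neg ht'.le, mul_assoc, ← Real.rpow_add ht']
    ring_nf; exact mul_comm _ _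
  -- tendsto for r = D
  have htD : Tendsto (fun t : ℝ => volume (thickening t A) /
      ENNReal.ofReal (t ^ ((N : ℝ) - D))) (𝓝[>] 0) (𝓝 (ENNReal.ofReal M)) := by
    apply Tendsto.congr' ((hratio D).mono fun t ht => ht.symm)
    apply ENNReal.tendsto_ofReal
    simpa using hL
  have hlowD : lowerMink N A D = ENNReal.ofReal M := by
    rw [lowerMink]; exact htD.liminf_eq
  have hupD : upperMink N A D = ENNReal.ofReal M := by
    rw [upperMink]; exact htD.limsup_eq
  -- tendsto 0 for r > D
  have ht0 : ∀ r : ℝ, D < r → Tendsto (fun t : ℝ => volume (thickening t A) /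
      ENNReal.ofReal (t ^ ((N : ℝ) - r))) (𝓝[>] 0) (𝓝 0) := by
    intro r hr
    apply Tendsto.congr' ((hratio r).mono fun t ht => ht.symm)
    have h2 : Tendsto (fun t : ℝ => t ^ (r - D)) (𝓝[>] (0:ℝ)) (𝓝 0) := by
      have h1 : Tendsto (fun t : ℝ => t ^ (r - D)) (𝓝 (0:ℝ)) (𝓝 ((0:ℝ) ^ (r - D))) :=
        (Real.continuousAt_rpow_const 0 _ (Or.inr (by linarith : (0:ℝ) ≤ r - D))).tendsto
      rw [Real.zero_rpow (sub_ne_zero.mpr (ne_of_gt hr))] at h1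
      exact h1.mono_left nhdsWithin_le_nhds
    have := (hL.mul h2)
    rw [mul_zero] at this
    simpa using ENNReal.tendsto_ofReal this
  -- eventual lower bound for r ≤ D
  have hlb : ∀ r : ℝ, r ≤ D → ENNReal.ofReal (M/2) ≤ lowerMink N A r := by
    intro r hr
    have hev2 : ∀ᶠ t in 𝓝[>] (0:ℝ),
        ENNReal.ofReal (M/2) ≤ volume (thickening t A) /
          ENNReal.ofReal (t ^ ((N : ℝ) - r)) := by
      have hsm : ∀ᶠ t in 𝓝[>] (0:ℝ), C * t ^ α ≤ M/2 :=
        hCα.eventually_le_const (by positivity)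
      have h1 : ∀ᶠ t in 𝓝[>] (0:ℝ), t ≤ 1 := by
        filter_upwards [Ioo_mem_nhdsGT_of_mem ⟨le_refl (0:ℝ), zero_lt_one⟩] with t ht
        exact ht.2.le
      filter_upwards [hratio r, hev, hsm, h1, self_mem_nhdsWithin] with t hrat ht hsm h1 htpos
      rw [hrat]
      apply ENNReal.ofReal_le_ofReal
      have hVt : M / 2 ≤ V t * t ^ (D - (N:ℝ)) := by
        have := hasymp t ht
        have := abs_le.1 this
        linarith [this.1]
      have h1le : (1:ℝ) ≤ t ^ (r - D) :=
        Real.one_le_rpow_of_pos_of_le_one_of_nonpos htpos h1 (by linarith)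
      calc M/2 = M/2 * 1 := by ring
      _ ≤ (V t * t ^ (D - (N:ℝ))) * t ^ (r - D) := by
          exact mul_le_mul hVt h1le zero_le_one
            (mul_nonneg (hVnn t) (Real.rpow_pos_of_pos htpos _).le)
    rw [lowerMink]
    have h := Filter.liminf_le_liminf hev2
    rwa [Filter.liminf_const] at h
  have hMne : ENNReal.ofReal M ≠ 0 := by
    simpa [ENNReal.ofReal_eq_zero, not_le] using hM
  have hM2ne : ENNReal.ofReal (M/2) ≠ 0 := by
    simp only [ne_eq, ENNReal.ofReal_eq_zero, not_le]
    linarith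
  -- the sets of vanishing contents are both `Ioi D`
  have hsetlow : {r : ℝ | 0 < r ∧ lowerMink N A r = 0} = Ioi D := by
    ext r
    simp only [mem_setOf_eq, mem_Ioi]
    constructor
    · rintro ⟨hr0, hr⟩
      by_contra hrD
      push_neg at hrD
      exact hM2ne (le_antisymm (hr ▸ hlb r hrD) (zero_le))
    · intro hr
      exact ⟨lt_of_le_of_lt hD hr, by rw [lowerMink]; exact (ht0 r hr).liminf_eq⟩
  have hsetup : {r : ℝ | 0 < r ∧ upperMink N A r = 0} = Ioi D := by
    ext r
    simp only [mem_setOf_eq, mem_Ioi]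
    constructor
    · rintro ⟨hr0, hr⟩
      by_contra hrD
      push_neg at hrD
      have : lowerMink N A r ≤ upperMink N A r := by
        rw [lowerMink, upperMink]; exact liminf_le_limsup
      rw [hr] at this
      exact hM2ne (le_antisymm (le_trans (hlb r hrD) this) (zero_le))
    · intro hr
      exact ⟨lt_of_le_of_lt hD hr, by rw [upperMink]; exact (ht0 r hr).limsup_eq⟩
  have hlowdim : lowerBoxDim N A = D := by rw [lowerBoxDim, hsetlow, csInf_Ioi]
  have hupdim : upperBoxDim N A = D := by rw [upperBoxDim, hsetup, csInf_Ioi]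
  -- upper bound for V
  set K : ℝ := M + C * t₀ ^ α with hKdef
  have hK : ∀ t ∈ Ioo (0:ℝ) t₀, V t ≤ K * t ^ ((N:ℝ) - D) := by
    intro t ht
    have h1 := (abs_le.1 (hasymp t ht)).2
    have h2 : C * t ^ α ≤ C * t₀ ^ α :=
      mul_le_mul_of_nonneg_left (Real.rpow_le_rpow ht.1.le ht.2.le hα.le) hC.le
    have h3 : V t * t ^ (D - (N:ℝ)) ≤ K := by rw [hKdef]; linarith
    have h4 : t ^ (D - (N:ℝ)) * t ^ ((N:ℝ) - D) = 1 := by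
      rw [← Real.rpow_add ht.1]; ring_nf; exact Real.rpow_zero t
    calc V t = V t * (t ^ (D - (N:ℝ)) * t ^ ((N:ℝ) - D)) := by rw [h4, mul_one]
    _ = (V t * t ^ (D - (N:ℝ))) * t ^ ((N:ℝ) - D) := by ring
    _ ≤ K * t ^ ((N:ℝ) - D) :=
      mul_le_mul_of_nonneg_right h3 (Real.rpow_pos_of_pos ht.1 _).le
  -- lower bound for V on a small interval
  have hsm : ∀ᶠ t in 𝓝[>] (0:ℝ), C * t ^ α ≤ M/2 :=
    hCα.eventually_le_const (half_pos hM)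
  rw [eventually_iff, mem_nhdsGT_iff_exists_Ioc_subset] at hsm
  obtain ⟨u, hu0, husub⟩ := hsm
  set t₁ : ℝ := min (min u (t₀/2)) 1 with ht₁def
  have ht₁0 : 0 < t₁ := by
    apply lt_min (lt_min hu0 (by linarith)) zero_lt_one
  have ht₁t₀ : t₁ < t₀ := lt_of_le_of_lt ((min_le_left _ _).trans (min_le_right _ _)) (by linarith)
  have hlow : ∀ t ∈ Ioc (0:ℝ) t₁, M/2 * t ^ ((N:ℝ) - D) ≤ V t := by
    intro t ht
    have htt₀ : t ∈ Ioo (0:ℝ) t₀ := ⟨ht.1, lt_of_le_of_lt ht.2 ht₁t₀⟩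
    have hCsm : C * t ^ α ≤ M/2 := husub ⟨ht.1, ht.2.trans ((min_le_left _ _).trans (min_le_left _ _))⟩
    have h1 := (abs_le.1 (hasymp t htt₀)).1
    have h3 : M/2 ≤ V t * t ^ (D - (N:ℝ)) := by linarith
    have h4 : t ^ (D - (N:ℝ)) * t ^ ((N:ℝ) - D) = 1 := by
      rw [← Real.rpow_add ht.1]; ring_nf; exact Real.rpow_zero t
    calc M/2 * t ^ ((N:ℝ) - D) ≤ (V t * t ^ (D - (N:ℝ))) * t ^ ((N:ℝ) - D) :=
      mul_le_mul_of_nonneg_right h3 (Real.rpow_pos_of_pos ht.1 _).le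
    _ = V t * (t ^ (D - (N:ℝ)) * t ^ ((N:ℝ) - D)) := by ring
    _ = V t := by rw [h4, mul_one]
  have hVKnn : 0 ≤ K := by
    have := Real.rpow_nonneg ht₀.le α
    nlinarith
  -- integrability of the tube integrand
  have hInt : ∀ δ : ℝ, 0 < δ → ∀ β : ℝ, D < β →
      IntegrableOn (fun t : ℝ => t ^ (β - (N:ℝ) - 1) * V t) (Ioc 0 δ) volume := by
    intro δ hδ β hβ
    set δ₁ : ℝ := min δ (t₀/2) with hδ₁def
    have hδ₁0 : 0 < δ₁ := lt_min hδ (by linarith)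
    have hδ₁δ : δ₁ ≤ δ := min_le_left _ _
    have hδ₁t₀ : δ₁ < t₀ := lt_of_le_of_lt (min_le_right _ _) (by linarith)
    have hgmeas : Measurable (fun t : ℝ => t ^ (β - (N:ℝ) - 1) * V t) := by
      apply Measurable.mul ?_ hVmeas
      fun_prop
    have h1 : IntegrableOn (fun t : ℝ => t ^ (β - (N:ℝ) - 1) * V t) (Ioc 0 δ₁) volume := by
      have hmaj : IntegrableOn (fun t : ℝ => K * t ^ (β - D - 1)) (Ioc 0 δ₁) volume := by
        have h0 : IntegrableOn (fun t : ℝ => t ^ (β - D - 1)) (Ioc 0 δ₁) volume :=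
          (integrableOn_Ioc_iff_integrableOn_Ioo (by exact enorm_ne_top)).2
            ((intervalIntegral.integrableOn_Ioo_rpow_iff hδ₁0).2 (by linarith))
        exact h0.const_mul K
      apply Integrable.mono' hmaj hgmeas.aestronglyMeasurable.restrict
      rw [ae_restrict_iff' measurableSet_Ioc]
      apply Eventually.of_forall
      intro t ht
      have ht0 : (0:ℝ) < t := ht.1
      have htt₀ : t ∈ Ioo (0:ℝ) t₀ := ⟨ht0, lt_of_le_of_lt ht.2 hδ₁t₀⟩
      rw [Real.norm_eq_abs, abs_of_nonneg (mul_nonneg (Real.rpow_pos_of_pos ht0 _).le (hVnn t))]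
      calc t ^ (β - (N:ℝ) - 1) * V t ≤ t ^ (β - (N:ℝ) - 1) * (K * t ^ ((N:ℝ) - D)) :=
        mul_le_mul_of_nonneg_left (hK t htt₀) (Real.rpow_pos_of_pos ht0 _).le
      _ = K * (t ^ (β - (N:ℝ) - 1) * t ^ ((N:ℝ) - D)) := by ring
      _ = K * t ^ (β - D - 1) := by rw [← Real.rpow_add ht0]; ring_nf
    have h2 : IntegrableOn (fun t : ℝ => t ^ (β - (N:ℝ) - 1) * V t) (Ioc δ₁ δ) volume := by
      apply Measure.integrableOn_of_bounded
        (M := max (δ₁ ^ (β - (N:ℝ) - 1)) (δ ^ (β - (N:ℝ) - 1)) * V δ)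
        measure_Ioc_lt_top.ne hgmeas.aestronglyMeasurable
      rw [ae_restrict_iff' measurableSet_Ioc]
      apply Eventually.of_forall
      intro t ht
      have ht0 : (0:ℝ) < t := lt_trans hδ₁0 ht.1
      rw [Real.norm_eq_abs, abs_of_nonneg (mul_nonneg (Real.rpow_pos_of_pos ht0 _).le (hVnn t))]
      have hpow : t ^ (β - (N:ℝ) - 1) ≤ max (δ₁ ^ (β - (N:ℝ) - 1)) (δ ^ (β - (N:ℝ) - 1)) := by
        rcases le_or_gt 0 (β - (N:ℝ) - 1) with hc | hc
        · exact le_max_of_le_right (Real.rpow_le_rpow ht0.le ht.2 hc)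
        · exact le_max_of_le_left (Real.rpow_le_rpow_of_nonpos hδ₁0 ht.1.le hc.le)
      exact mul_le_mul hpow (hVmono ht.2) (hVnn t)
        (le_trans (Real.rpow_pos_of_pos ht0 _).le hpow)
    have := h1.union h2
    rwa [Ioc_union_Ioc_eq_Ioc hδ₁0.le hδ₁δ] at this
  -- non-integrability for β ≤ D
  have hNonInt : ∀ δ : ℝ, 0 < δ → ∀ β : ℝ, β ≤ D →
      ¬ IntegrableOn (fun t : ℝ => t ^ (β - (N:ℝ) - 1) * V t) (Ioc 0 δ) volume := by
    intro δ hδ β hβ hcon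
    set t₂ : ℝ := min t₁ δ with ht₂def
    have ht₂0 : 0 < t₂ := lt_min ht₁0 hδ
    have hcon2 := hcon.mono_set (Ioc_subset_Ioc_right (min_le_right t₁ δ))
    have hmin : IntegrableOn (fun t : ℝ => M/2 * t ^ (-1:ℝ)) (Ioc 0 t₂) volume := by
      apply Integrable.mono' hcon2
      · exact (Measurable.aestronglyMeasurable (by fun_prop)).restrict
      rw [ae_restrict_iff' measurableSet_Ioc]
      apply Eventually.of_forall
      intro t ht
      have ht0 : (0:ℝ) < t := ht.1
      have htt₁ : t ∈ Ioc (0:ℝ) t₁ := ⟨ht0, ht.2.trans (min_le_left _ _)⟩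
      have ht1 : t ≤ 1 := le_trans (ht.2.trans (min_le_left _ _)) (min_le_right _ 1)
      rw [Real.norm_eq_abs, abs_of_nonneg (mul_nonneg (by linarith) (Real.rpow_pos_of_pos ht0 _).le)]
      have s1 : M/2 * t ^ (-1:ℝ) ≤ M/2 * t ^ (β - D - 1) := by
        apply mul_le_mul_of_nonneg_left ?_ (by linarith : (0:ℝ) ≤ M/2)
        exact Real.rpow_le_rpow_of_exponent_ge ht0 ht1 (by linarith)
      have s2 : M/2 * t ^ (β - D - 1) = (M/2 * t ^ ((N:ℝ) - D)) * t ^ (β - (N:ℝ) - 1) := by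
        rw [mul_assoc, ← Real.rpow_add ht0]; ring_nf
      have s3 : (M/2 * t ^ ((N:ℝ) - D)) * t ^ (β - (N:ℝ) - 1) ≤ t ^ (β - (N:ℝ) - 1) * V t := by
        rw [mul_comm (t ^ (β - (N:ℝ) - 1)) (V t)]
        exact mul_le_mul_of_nonneg_right (hlow t htt₁) (Real.rpow_pos_of_pos ht0 _).le
      linarith
    have hinv : IntegrableOn (fun t : ℝ => t ^ (-1:ℝ)) (Ioo 0 t₂) volume := by
      have h3 : IntegrableOn (fun x : ℝ => 2 / M * (M / 2 * x ^ (-1:ℝ))) (Ioo 0 t₂) volume :=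
        (hmin.mono_set Ioo_subset_Ioc_self).const_mul (2/M)
      apply h3.congr_fun ?_ measurableSet_Ioo
      intro t ht
      field_simp
    rw [intervalIntegral.integrableOn_Ioo_rpow_iff ht₂0] at hinv
    linarith
  -- the set of integrable exponents
  have hSinf : ∀ δ : ℝ, 0 < δ →
      sInf {β : ℝ | IntegrableOn (fun t : ℝ => t ^ (β - (N:ℝ) - 1) * V t) (Ioc 0 δ) volume}
        = D := by
    intro δ hδ
    have hset : {β : ℝ | IntegrableOn (fun t : ℝ => t ^ (β - (N:ℝ) - 1) * V t) (Ioc 0 δ) volume}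
        = Ioi D := by
      ext β
      simp only [mem_setOf_eq, mem_Ioi]
      exact ⟨fun h => by by_contra hβ; exact hNonInt δ hδ β (not_lt.1 hβ) h, hInt δ hδ β⟩
    rw [hset, csInf_Ioi]
  -- the meromorphic continuation
  have hF : ∀ δ : ℝ, 0 < δ → ∃ F : ℂ → ℂ,
      DifferentiableOn ℂ F ({s : ℂ | D - α < s.re} \ {(D : ℂ)}) ∧
      (∀ s : ℂ, D < s.re → F s = ∫ t in Ioc (0 : ℝ) δ,
          (t : ℂ) ^ (s - (N : ℂ) - 1) * ((V t : ℝ) : ℂ)) ∧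
      Tendsto (fun s : ℂ => (s - (D : ℂ)) * F s) (𝓝[≠] (D : ℂ)) (𝓝 (M : ℂ)) := by
    intro δ hδ
    set δ' : ℝ := min δ (t₀/2) with hδ'def
    have hδ'0 : 0 < δ' := lt_min hδ (by linarith)
    have hδ'δ : δ' ≤ δ := min_le_left _ _
    have hδ't₀ : δ' < t₀ := lt_of_le_of_lt (min_le_right _ _) (by linarith)
    have hδ'ne : (δ' : ℂ) ≠ 0 := by exact_mod_cast hδ'0.ne'
    set u : ℝ → ℂ := fun t => ((V t * t ^ (-(N:ℝ)) : ℝ) : ℂ) with hu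
    set v : ℝ → ℂ := fun t => ((M * t ^ (-D) : ℝ) : ℂ) with hv
    set f₁ : ℝ → ℂ := fun t => (Ioc 0 δ).indicator u t - (Ioc 0 δ').indicator v t with hf₁
    have humeas : Measurable u :=
      Complex.measurable_ofReal.comp (hVmeas.mul (by fun_prop))
    have hvmeas : Measurable v :=
      Complex.measurable_ofReal.comp (by fun_prop)
    have hf₁meas : Measurable f₁ :=
      (humeas.indicator measurableSet_Ioc).sub (hvmeas.indicator measurableSet_Ioc)
    -- local integrability
    have hloc : LocallyIntegrableOn f₁ (Ioi 0) volume := by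
      rw [locallyIntegrableOn_iff isOpen_Ioi.isLocallyClosed]
      intro k hk hkc
      rcases k.eq_empty_or_nonempty with rfl | hne
      · exact integrableOn_empty
      have hbdd : BddBelow k := hkc.bddBelow
      set a : ℝ := sInf k with ha
      have hak : a ∈ k := hkc.sInf_mem hne
      have ha0 : (0:ℝ) < a := hk hak
      apply Measure.integrableOn_of_bounded (M := V δ * a ^ (-(N:ℝ)) + M * a ^ (-D))
        hkc.measure_lt_top.ne hf₁meas.aestronglyMeasurable
      rw [ae_restrict_iff' hkc.measurableSet]
      apply Eventually.of_forall
      intro t htk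
      have hat : a ≤ t := csInf_le hbdd htk
      have ht0 : (0:ℝ) < t := lt_of_lt_of_le ha0 hat
      have hnu : ‖(Ioc 0 δ).indicator u t‖ ≤ V δ * a ^ (-(N:ℝ)) := by
        by_cases hmem : t ∈ Ioc (0:ℝ) δ
        · rw [indicator_of_mem hmem, hu, Complex.norm_real, Real.norm_eq_abs,
            abs_of_nonneg (mul_nonneg (hVnn t) (Real.rpow_pos_of_pos ht0 _).le)]
          exact mul_le_mul (hVmono hmem.2)
            (Real.rpow_le_rpow_of_nonpos ha0 hat (by simp [Nat.cast_nonneg]))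
            (Real.rpow_pos_of_pos ht0 _).le (hVnn δ)
        · rw [indicator_of_notMem hmem, norm_zero]
          exact mul_nonneg (hVnn δ) (Real.rpow_pos_of_pos ha0 _).le
      have hnv : ‖(Ioc 0 δ').indicator v t‖ ≤ M * a ^ (-D) := by
        by_cases hmem : t ∈ Ioc (0:ℝ) δ'
        · rw [indicator_of_mem hmem, hv, Complex.norm_real, Real.norm_eq_abs,
            abs_of_nonneg (mul_nonneg hM.le (Real.rpow_pos_of_pos ht0 _).le)]
          exact mul_le_mul_of_nonneg_left
            (Real.rpow_le_rpow_of_nonpos ha0 hat (by linarith)) hM.le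
        · rw [indicator_of_notMem hmem, norm_zero]
          exact mul_nonneg hM.le (Real.rpow_pos_of_pos ha0 _).le
      calc ‖f₁ t‖ ≤ ‖(Ioc 0 δ).indicator u t‖ + ‖(Ioc 0 δ').indicator v t‖ := norm_sub_le _ _
      _ ≤ V δ * a ^ (-(N:ℝ)) + M * a ^ (-D) := add_le_add hnu hnv
    -- vanishing at infinity
    have htop : ∀ c : ℝ, f₁ =O[atTop] (fun t : ℝ => t ^ (-c)) := by
      intro c
      rw [Asymptotics.isBigO_iff]
      refine ⟨1, ?_⟩
      filter_upwards [eventually_gt_atTop δ] with t ht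
      have h1 : t ∉ Ioc (0:ℝ) δ := fun hc => absurd hc.2 (not_le.2 ht)
      have h2 : t ∉ Ioc (0:ℝ) δ' := fun hc => absurd hc.2 (not_le.2 (hδ'δ.trans_lt ht))
      rw [hf₁]
      simp only [indicator_of_notMem h1, indicator_of_notMem h2, sub_zero, norm_zero]
      positivity
    -- bound at zero
    have hbot : f₁ =O[𝓝[>] (0:ℝ)] (fun t : ℝ => t ^ (-(D - α))) := by
      rw [Asymptotics.isBigO_iff]
      refine ⟨C, ?_⟩
      filter_upwards [Ioo_mem_nhdsGT_of_mem ⟨le_refl (0:ℝ), hδ'0⟩] with t ht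
      have ht0 : (0:ℝ) < t := ht.1
      have htδ' : t ∈ Ioc (0:ℝ) δ' := ⟨ht.1, ht.2.le⟩
      have htδ : t ∈ Ioc (0:ℝ) δ := ⟨ht.1, ht.2.le.trans hδ'δ⟩
      rw [hf₁]
      simp only [indicator_of_mem htδ, indicator_of_mem htδ']
      have heqR : V t * t ^ (-(N:ℝ)) - M * t ^ (-D)
          = (V t * t ^ (D - (N:ℝ)) - M) * t ^ (-D) := by
        rw [sub_mul, mul_assoc, ← Real.rpow_add ht0]
        ring_nf
      have heq : u t - v t = (((V t * t ^ (D - (N:ℝ)) - M) * t ^ (-D) : ℝ) : ℂ) := by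
        rw [hu, hv, ← Complex.ofReal_sub, heqR]
      rw [heq, Complex.norm_real, Real.norm_eq_abs, abs_mul,
        abs_of_nonneg (Real.rpow_pos_of_pos ht0 (-D)).le]
      have h2 := hasymp t ⟨ht0, ht.2.trans hδ't₀⟩
      calc |V t * t ^ (D - (N:ℝ)) - M| * t ^ (-D) ≤ (C * t ^ α) * t ^ (-D) :=
        mul_le_mul_of_nonneg_right h2 (Real.rpow_pos_of_pos ht0 _).le
      _ = C * ‖t ^ (-(D - α))‖ := by
          rw [Real.norm_eq_abs, abs_of_nonneg (Real.rpow_pos_of_pos ht0 _).le,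
            mul_assoc, ← Real.rpow_add ht0]
          ring_nf
    -- differentiability of the Mellin transform
    have hmd : ∀ s : ℂ, D - α < s.re → DifferentiableAt ℂ (mellin f₁) s := by
      intro s hs
      exact mellin_differentiableAt_of_isBigO_rpow hloc (htop (s.re + 1))
        (lt_add_one _) hbot hs
    set F : ℂ → ℂ := fun s => mellin f₁ s + (M:ℂ) * (δ':ℂ) ^ (s - (D:ℂ)) / (s - (D:ℂ))
      with hFdef
    refine ⟨F, ?_, ?_, ?_⟩
    · -- differentiability on the half plane minus the pole
      intro s hs
      obtain ⟨hs1, hs2⟩ := hs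
      have hsD : s ≠ (D:ℂ) := by simpa using hs2
      apply DifferentiableAt.differentiableWithinAt
      apply DifferentiableAt.add (hmd s hs1)
      apply DifferentiableAt.div
      · exact ((differentiableAt_id.sub_const _).const_cpow (Or.inl hδ'ne)).const_mul _
      · exact differentiableAt_id.sub_const _
      · exact sub_ne_zero.2 hsD
    · -- identity with the tube zeta function on re s > D
      intro s hsD
      have hsne : s ≠ (D:ℂ) := by
        intro h
        rw [h] at hsD
        simp only [Complex.ofReal_re] at hsD
        exact lt_irrefl D hsD
      have hsDne : s - (D:ℂ) ≠ 0 := sub_ne_zero.2 hsne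
      have hreInt := hInt δ hδ s.re hsD
      have hcOn : ∀ (c : ℂ) (b : ℝ), ContinuousOn (fun t : ℝ => (t:ℂ) ^ c) (Ioc 0 b) :=
        fun c b t ht => (Complex.continuousAt_ofReal_cpow_const t _ (Or.inr (ne_of_gt ht.1))).continuousWithinAt
      have hIu : IntegrableOn (fun t : ℝ => (t:ℂ) ^ (s - 1) * u t) (Ioc 0 δ) volume := by
        apply Integrable.mono' hreInt
        · exact ((hcOn (s-1) δ).aestronglyMeasurable measurableSet_Ioc).mul
            humeas.aestronglyMeasurable.restrict
        · rw [ae_restrict_iff' measurableSet_Ioc]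
          apply Eventually.of_forall
          intro t ht
          have ht0 : (0:ℝ) < t := ht.1
          rw [norm_mul, Complex.norm_cpow_eq_rpow_re_of_pos ht0,
            hu, Complex.norm_real, Real.norm_eq_abs,
            abs_of_nonneg (mul_nonneg (hVnn t) (Real.rpow_pos_of_pos ht0 _).le)]
          have : t ^ (s - 1).re * (V t * t ^ (-(N:ℝ))) = t ^ (s.re - (N:ℝ) - 1) * V t := by
            rw [show (s-1).re = s.re - 1 by simp, mul_comm (V t) _, ← mul_assoc,
              ← Real.rpow_add ht0]
            ring_nf
          rw [this]
      have hIv : IntegrableOn (fun t : ℝ => (t:ℂ) ^ (s - 1) * v t) (Ioc 0 δ') volume := by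
        have hmaj : IntegrableOn (fun t : ℝ => M * t ^ (s.re - D - 1)) (Ioc 0 δ') volume := by
          have h0 : IntegrableOn (fun t : ℝ => t ^ (s.re - D - 1)) (Ioc 0 δ') volume :=
            (integrableOn_Ioc_iff_integrableOn_Ioo (by exact enorm_ne_top)).2
              ((intervalIntegral.integrableOn_Ioo_rpow_iff hδ'0).2 (by linarith))
          exact h0.const_mul M
        apply Integrable.mono' hmaj
        · exact ((hcOn (s-1) δ').aestronglyMeasurable measurableSet_Ioc).mul
            hvmeas.aestronglyMeasurable.restrict
        · rw [ae_restrict_iff' measurableSet_Ioc]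
          apply Eventually.of_forall
          intro t ht
          have ht0 : (0:ℝ) < t := ht.1
          rw [norm_mul, Complex.norm_cpow_eq_rpow_re_of_pos ht0,
            hv, Complex.norm_real, Real.norm_eq_abs,
            abs_of_nonneg (mul_nonneg hM.le (Real.rpow_pos_of_pos ht0 _).le)]
          have : t ^ (s - 1).re * (M * t ^ (-D)) = M * t ^ (s.re - D - 1) := by
            rw [show (s-1).re = s.re - 1 by simp, mul_comm M _, ← mul_assoc,
              ← Real.rpow_add ht0]
            ring_nf
          rw [this]
      have hind : ∀ (b : ℝ) (w : ℝ → ℂ), (fun t : ℝ => (t:ℂ) ^ (s-1) • (Ioc 0 b).indicator w t)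
          = (Ioc 0 b).indicator (fun t => (t:ℂ) ^ (s-1) * w t) := by
        intro b w
        funext t
        by_cases h : t ∈ Ioc (0:ℝ) b
        · simp [indicator_of_mem h]
        · simp [indicator_of_notMem h]
      have hrr : ∀ b : ℝ, Measure.restrict (volume.restrict (Ioi (0:ℝ))) (Ioc 0 b)
          = volume.restrict (Ioc (0:ℝ) b) := by
        intro b
        rw [Measure.restrict_restrict measurableSet_Ioc,
          inter_eq_self_of_subset_left Ioc_subset_Ioi_self]
      have hIU : Integrable (fun t : ℝ => (t:ℂ)^(s-1) • (Ioc 0 δ).indicator u t)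
          (volume.restrict (Ioi 0)) := by
        rw [hind δ u, integrable_indicator_iff measurableSet_Ioc, IntegrableOn, hrr δ]
        exact hIu
      have hIV : Integrable (fun t : ℝ => (t:ℂ)^(s-1) • (Ioc 0 δ').indicator v t)
          (volume.restrict (Ioi 0)) := by
        rw [hind δ' v, integrable_indicator_iff measurableSet_Ioc, IntegrableOn, hrr δ']
        exact hIv
      have hmel : mellin f₁ s = (∫ t in Ioc (0:ℝ) δ, (t:ℂ)^(s-1) * u t)
          - (∫ t in Ioc (0:ℝ) δ', (t:ℂ)^(s-1) * v t) := by
        have e1 : (fun t : ℝ => (t:ℂ)^(s-1) • f₁ t)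
            = fun t : ℝ => (t:ℂ)^(s-1) • (Ioc 0 δ).indicator u t
              - (t:ℂ)^(s-1) • (Ioc 0 δ').indicator v t := by
          funext t
          rw [hf₁]
          simp [smul_sub, smul_eq_mul, mul_sub]
        rw [mellin, e1, integral_sub hIU hIV]
        congr 1
        · rw [hind δ u, integral_indicator measurableSet_Ioc, hrr δ]
        · rw [hind δ' v, integral_indicator measurableSet_Ioc, hrr δ']
      have hv_int : (∫ t in Ioc (0:ℝ) δ', (t:ℂ)^(s-1) * v t)
          = (M:ℂ) * (δ':ℂ) ^ (s - (D:ℂ)) / (s - (D:ℂ)) := by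
        have h1 : ∀ t ∈ Ioc (0:ℝ) δ', (t:ℂ)^(s-1) * v t = (M:ℂ) * (t:ℂ) ^ (s - (D:ℂ) - 1) := by
          intro t ht
          have ht0 : (0:ℝ) < t := ht.1
          have htne : (t:ℂ) ≠ 0 := by exact_mod_cast ht0.ne'
          have hcp : (t:ℂ) ^ (s - (D:ℂ) - 1) = (t:ℂ)^(s-1) * (t:ℂ)^(-(D:ℂ)) := by
            rw [← Complex.cpow_add _ _ htne]
            congr 1
            ring
          simp only [hv, hcp]
          rw [Complex.ofReal_mul, Complex.ofReal_cpow ht0.le]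
          push_cast
          ring
        rw [setIntegral_congr_fun measurableSet_Ioc h1, integral_const_mul]
        have h2 : (∫ t in Ioc (0:ℝ) δ', (t:ℂ) ^ (s - (D:ℂ) - 1))
            = (δ':ℂ) ^ (s - (D:ℂ)) / (s - (D:ℂ)) := by
          rw [← intervalIntegral.integral_of_le hδ'0.le]
          rw [integral_cpow (Or.inl (by simp; linarith))]
          rw [sub_add_cancel, show ((0:ℝ):ℂ) = 0 from by norm_num,
            Complex.zero_cpow hsDne, sub_zero]
        rw [h2, mul_div_assoc]
      have hu_int : (∫ t in Ioc (0:ℝ) δ, (t:ℂ)^(s-1) * u t)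
          = ∫ t in Ioc (0:ℝ) δ, (t:ℂ) ^ (s - (N:ℂ) - 1) * ((V t : ℝ) : ℂ) := by
        apply setIntegral_congr_fun measurableSet_Ioc
        intro t ht
        have ht0 : (0:ℝ) < t := ht.1
        have htne : (t:ℂ) ≠ 0 := by exact_mod_cast ht0.ne'
        have hcp : (t:ℂ) ^ (s - (N:ℂ) - 1) = (t:ℂ)^(s-1) * (t:ℂ)^(-(N:ℂ)) := by
          rw [← Complex.cpow_add _ _ htne]
          congr 1
          ring
        simp only [hu, hcp]
        rw [Complex.ofReal_mul, Complex.ofReal_cpow ht0.le]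
        push_cast
        ring
      rw [hFdef]
      simp only
      rw [hmel, hv_int, hu_int]
      ring
    · -- the residue limit
      have hDre : ((D:ℂ)).re = D := by simp
      have hcont : ContinuousAt (mellin f₁) (D:ℂ) :=
        (hmd (D:ℂ) (by rw [hDre]; linarith)).continuousAt
      have t1 : Tendsto (fun s : ℂ => (s - (D:ℂ))) (𝓝 (D:ℂ)) (𝓝 0) := by
        have h6 : ContinuousAt (fun s : ℂ => s - (D:ℂ)) (D:ℂ) :=
          continuousAt_id.sub continuousAt_const
        simpa using h6.tendsto
      have t2 : Tendsto (fun s : ℂ => (s - (D:ℂ)) * mellin f₁ s) (𝓝 (D:ℂ)) (𝓝 0) := by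
        have := t1.mul hcont
        simpa using this
      have t3 : Tendsto (fun s : ℂ => (M:ℂ) * (δ':ℂ) ^ (s - (D:ℂ))) (𝓝 (D:ℂ)) (𝓝 (M:ℂ)) := by
        have hcc : Tendsto (fun s : ℂ => (δ':ℂ) ^ (s - (D:ℂ))) (𝓝 (D:ℂ)) (𝓝 1) := by
          have h5 := (continuousAt_const_cpow hδ'ne (b := 0)).tendsto.comp t1
          simpa [Function.comp_def, Complex.cpow_zero] using h5
        have := hcc.const_mul (M:ℂ)
        simpa using this
      have hG : Tendsto (fun s : ℂ => (s - (D:ℂ)) * mellin f₁ s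
          + (M:ℂ) * (δ':ℂ) ^ (s - (D:ℂ))) (𝓝 (D:ℂ)) (𝓝 (M:ℂ)) := by
        have := t2.add t3
        simpa using this
      apply Tendsto.congr' ?_ (hG.mono_left nhdsWithin_le_nhds)
      filter_upwards [self_mem_nhdsWithin] with s hs
      have hsD : s - (D:ℂ) ≠ 0 := sub_ne_zero.2 hs
      rw [hFdef]
      simp only
      field_simp
  exact ⟨hlowdim, hupdim, hlowD, hupD, fun δ hδ => ⟨hSinf δ hδ, hF δ hδ⟩⟩
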